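/- arXiv:2405.07107 — 2 statements merged into one kernel-verified Lean document; each statement's English description precedes it below -/
import Mathlib

section
/- Let U, X, Y be discrete random variables with finite support on a common probability space. If U ⊥⊥ Y | X, then S(X;U) =ι S((X,Y);U), i.e., the minimal sufficient statistic of X for U and the minimal sufficient statistic of the joint variable (X,Y) for U are informationally equivalent. -/
namespace Paper

/-- The probability of an event under a probability mass function. -/
noncomputable def pr {Ω : Type} (μ : PMF Ω) (E : Set Ω) : ENNReal :=
  μ.toOuterMeasure E

/-- Conditional independence `X ⊥⊥ Y | Z`:
`p(x,y,z) p(z) = p(x,z) p(y,z)` for all `x, y, z`. -/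
def CondIndep {Ω α β γ : Type} (μ : PMF Ω) (X : Ω → α) (Y : Ω → β) (Z : Ω → γ) : Prop :=
  ∀ (x : α) (y : β) (z : γ),
    pr μ {ω | X ω = x ∧ Y ω = y ∧ Z ω = z} * pr μ {ω | Z ω = z}
      = pr μ {ω | X ω = x ∧ Z ω = z} * pr μ {ω | Y ω = y ∧ Z ω = z}

/-- Unconditional independence `X ⊥⊥ Y`. -/
def Indep {Ω α β : Type} (μ : PMF Ω) (X : Ω → α) (Y : Ω → β) : Prop :=
  ∀ (x : α) (y : β),
    pr μ {ω | X ω = x ∧ Y ω = y} = pr μ {ω | X ω = x} * pr μ {ω | Y ω = y}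

/-- `X ≥ι Y`: `X` functionally determines `Y` (with probability one). -/
def FunDep {Ω α β : Type} (μ : PMF Ω) (X : Ω → α) (Y : Ω → β) : Prop :=
  ∃ f : α → β, ∀ ω ∈ μ.support, Y ω = f (X ω)

/-- `X =ι Y`: informational equivalence. -/
def InfoEq {Ω α β : Type} (μ : PMF Ω) (X : Ω → α) (Y : Ω → β) : Prop :=
  FunDep μ X Y ∧ FunDep μ Y X

/-- The random variable `X` has finite support. -/
def FinSupp {Ω α : Type} (μ : PMF Ω) (X : Ω → α) : Prop :=
  (X '' μ.support).Finite

/-- The random variable `X` has support of cardinality at most `ℓ`. -/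
def CardLE {Ω α : Type} (μ : PMF Ω) (X : Ω → α) (ℓ : ℕ) : Prop :=
  ∃ s : Finset α, s.card ≤ ℓ ∧ ∀ ω ∈ μ.support, X ω ∈ s

/-- `X` is uniformly distributed with support of cardinality `ℓ`. -/
def UniformCard {Ω α : Type} (μ : PMF Ω) (X : Ω → α) (ℓ : ℕ) : Prop :=
  ∃ S : Finset α, S.card = ℓ ∧ (∀ x ∈ S, pr μ {ω | X ω = x} = (ℓ : ENNReal)⁻¹) ∧
    ∀ x, x ∉ S → pr μ {ω | X ω = x} = 0

/-- The probability mass function of the random variable `X`. -/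
noncomputable def distOf {Ω α : Type} (μ : PMF Ω) (X : Ω → α) : α → ENNReal :=
  fun x => pr μ {ω | X ω = x}

/-- `p ⪰ q` : `p` majorizes `q`, i.e. for every `k`, the sum of the `k` largest values
of `p` is at least the sum of the `k` largest values of `q`. -/
def Majorizes (p q : ℕ → ENNReal) : Prop :=
  ∀ s : Finset ℕ, ∃ t : Finset ℕ, t.card ≤ s.card ∧ ∑ x ∈ s, q x ≤ ∑ x ∈ t, p x

/-- `T` is a sufficient statistic of `X` for `U`: `X ≥ι T` and `U ⊥⊥ X | T`. -/
def SuffStat {Ω α β γ : Type} (μ : PMF Ω) (X : Ω → α) (U : Ω → β) (T : Ω → γ) : Prop :=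
  FunDep μ X T ∧ CondIndep μ U X T

/-- `T` is a minimal sufficient statistic of `X` for `U`. -/
def MinSuffStat {Ω α β γ : Type} (μ : PMF Ω) (X : Ω → α) (U : Ω → β) (T : Ω → γ) : Prop :=
  SuffStat μ X U T ∧
    ∀ (δ : Type) (T' : Ω → δ), SuffStat μ X U T' → FunDep μ T' T

/-- Mutual independence of the subfamily `(V i)_{i ∈ s}`: each `V i` (for `i ∈ s`) is
independent of the joint variable of the others. -/
def MutIndepOn {Ω ι : Type} {β : ι → Type} (μ : PMF Ω) (V : ∀ i, Ω → β i)
    (s : Finset ι) : Prop :=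
  ∀ i ∈ s, Indep μ (V i) (fun ω => fun j : {j // j ∈ s ∧ j ≠ i} => V j.1 ω)

/-- Mutual independence of the whole family `(V i)_i`. -/
def MutIndep {Ω ι : Type} {β : ι → Type} (μ : PMF Ω) (V : ∀ i, Ω → β i) : Prop :=
  ∀ i, Indep μ (V i) (fun ω => fun j : {j // j ≠ i} => V j.1 ω)

/-- Mutual independence of `(V i)_{i ∈ C}` for a list `C` of indices. -/
def MutIndepL {Ω : Type} (μ : PMF Ω) (V : ℕ → Ω → ℕ) (C : List ℕ) : Prop :=
  ∀ i ∈ C, Indep μ (V i) (fun ω => fun j : {j // j ∈ C ∧ j ≠ i} => V j.1 ω)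

/-- The joint random variable `(X a)_{a ∈ A}` for a list `A` of indices. -/
def jointOn {Ω : Type} (X : ℕ → Ω → ℕ) (A : List ℕ) : Ω → ({a : ℕ // a ∈ A} → ℕ) :=
  fun ω a => X a.1 ω

/-- The joint random variable `(T i)_{i ∈ S}` for a finset `S` of indices. -/
def jointFin {Ω ι : Type} {β : ι → Type} (T : ∀ i, Ω → β i) (S : Finset ι) :
    Ω → ((i : {i // i ∈ S}) → β i.1) :=
  fun ω i => T i.1 ω

/-- The set of parents (in-neighbours) of `w` in the directed graph with edge relation `E`. -/
def parentSet {ν : Type} (E : ν → ν → Prop) (w : ν) : Set ν := {v | E v w}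

/-- The set of nodes that are neither descendants nor parents of `w`. -/
def nonDescSet {ν : Type} (E : ν → ν → Prop) (w : ν) : Set ν :=
  {v | ¬ Relation.ReflTransGen E w v ∧ ¬ E v w}

/-- The collection of random variables `(X v)_v` satisfies the Bayesian network structure
with edge relation `E`: each variable is conditionally independent of its
non-descendant non-parent variables given its parent variables. -/
def SatisfiesBN {Ω ν : Type} {β : ν → Type} (μ : PMF Ω) (X : ∀ v, Ω → β v)
    (E : ν → ν → Prop) : Prop :=
  ∀ w : ν, CondIndep μ (X w)
    (fun ω => fun v : nonDescSet E w => X v.1 ω)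
    (fun ω => fun v : parentSet E w => X v.1 ω)

/-- `E` is (the edge list of) a directed acyclic graph on the nodes `{0, …, n-1}`. -/
def IsDAG (n : ℕ) (E : List (ℕ × ℕ)) : Prop :=
  (∀ e ∈ E, e.1 < n ∧ e.2 < n) ∧
    ∀ i : ℕ, ¬ Relation.TransGen (fun a c => (a, c) ∈ E) i i

/-- The edge relation on `Fin n` determined by an edge list. -/
def edgeRelOn (n : ℕ) (E : List (ℕ × ℕ)) : Fin n → Fin n → Prop :=
  fun i j => ((i : ℕ), (j : ℕ)) ∈ E

/-- `(X_0, …, X_{n-1})` satisfies the Bayesian network given by the edge list `E`. -/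
def SatisfiesBNn {Ω : Type} (μ : PMF Ω) (n : ℕ) (X : ℕ → Ω → ℕ)
    (E : List (ℕ × ℕ)) : Prop :=
  SatisfiesBN μ (fun i : Fin n => X (i : ℕ)) (edgeRelOn n E)

/-- `(A, C, B) ∈ I(G_1, …, G_m)`: every collection of finitely supported discrete random
variables satisfying all the network structures in `Gs` satisfies `X_A ⊥⊥ X_B | X_C`. -/
def ImpliedCI (n : ℕ) (Gs : List (List (ℕ × ℕ))) (A C B : List ℕ) : Prop :=
  ∀ (Ω : Type) (μ : PMF Ω) (X : ℕ → Ω → ℕ),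
    (∀ i, i < n → FinSupp μ (X i)) →
    (∀ G ∈ Gs, SatisfiesBNn μ n X G) →
    CondIndep μ (jointOn X A) (jointOn X B) (jointOn X C)

/-- Two lists are disjoint as sets. -/
def DisjointL (A B : List ℕ) : Prop := ∀ a ∈ A, a ∉ B

end Paper
namespace Paper

lemma pr_congr {Ω : Type} (μ : PMF Ω) {E F : Set Ω}
    (h : ∀ ω ∈ μ.support, (ω ∈ E ↔ ω ∈ F)) : pr μ E = pr μ F := by
  classical
  unfold pr
  rw [PMF.toOuterMeasure_apply, PMF.toOuterMeasure_apply]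
  refine tsum_congr fun ω => ?_
  by_cases hω : μ ω = 0
  · simp [Set.indicator_apply, hω]
  · have := h ω (by simpa [PMF.mem_support_iff] using hω)
    simp [Set.indicator_apply, this]

lemma pr_zero {Ω : Type} (μ : PMF Ω) {E : Set Ω}
    (h : ∀ ω ∈ μ.support, ω ∉ E) : pr μ E = 0 := by
  have : pr μ E = pr μ (∅ : Set Ω) := pr_congr μ (fun ω hω => by simp [h ω hω])
  rw [this]
  simp [pr]

lemma pr_mono {Ω : Type} (μ : PMF Ω) {E F : Set Ω} (h : E ⊆ F) : pr μ E ≤ pr μ F :=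
  μ.toOuterMeasure.mono h

lemma pr_le_one {Ω : Type} (μ : PMF Ω) (E : Set Ω) : pr μ E ≤ 1 := by
  have h := pr_mono μ (Set.subset_univ E)
  refine h.trans ?_
  unfold pr
  rw [PMF.toOuterMeasure_apply]
  simp [μ.tsum_coe]

lemma pr_ne_top {Ω : Type} (μ : PMF Ω) (E : Set Ω) : pr μ E ≠ ⊤ :=
  fun h => by simpa [h] using pr_le_one μ E

lemma pr_sum_fiber {Ω γ : Type} (μ : PMF Ω) (Y : Ω → γ) (S : Finset γ)
    (hS : ∀ ω ∈ μ.support, Y ω ∈ S) (E : Set Ω) :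
    pr μ E = ∑ y ∈ S, pr μ (E ∩ {ω | Y ω = y}) := by
  classical
  unfold pr
  simp only [PMF.toOuterMeasure_apply]
  rw [← Summable.tsum_finsetSum (fun i _ => ENNReal.summable)]
  refine tsum_congr fun ω => ?_
  by_cases hω : μ ω = 0
  · simp [Set.indicator_apply, hω]
  · have hmem : ω ∈ μ.support := by simpa [PMF.mem_support_iff] using hω
    by_cases hE : ω ∈ E
    · rw [Set.indicator_of_mem hE, Finset.sum_eq_single (Y ω)]
      · simp [Set.indicator_apply, hE]
      · intro y _ hy
        exact Set.indicator_of_notMem (fun hc => hy (hc.2.symm)) μ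
      · intro hc; exact absurd (hS ω hmem) hc
    · rw [Set.indicator_of_notMem hE]
      refine (Finset.sum_eq_zero fun y _ => ?_).symm
      exact Set.indicator_of_notMem (fun hc => hE hc.1) μ

/-- Decomposition: `U ⊥⊥ (X,Y) | T` implies `U ⊥⊥ X | T`. -/
lemma condIndep_fst {Ω α β γ ε : Type} (μ : PMF Ω) (U : Ω → α) (X : Ω → β)
    (Y : Ω → γ) (T : Ω → ε) (hY : FinSupp μ Y)
    (h : CondIndep μ U (fun ω => (X ω, Y ω)) T) : CondIndep μ U X T := by
  intro u x t
  have hS : ∀ ω ∈ μ.support, Y ω ∈ hY.toFinset := fun ω hω => by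
    exact (Set.Finite.mem_toFinset (hs := hY)).2 ⟨ω, hω, rfl⟩
  rw [pr_sum_fiber μ Y hY.toFinset hS {ω | U ω = u ∧ X ω = x ∧ T ω = t},
      pr_sum_fiber μ Y hY.toFinset hS {ω | X ω = x ∧ T ω = t},
      Finset.sum_mul, Finset.mul_sum]
  refine Finset.sum_congr rfl fun y _ => ?_
  have e1 : ({ω | U ω = u ∧ X ω = x ∧ T ω = t} ∩ {ω | Y ω = y})
      = {ω | U ω = u ∧ (X ω, Y ω) = (x, y) ∧ T ω = t} := by
    ext ω; simp only [Set.mem_inter_iff, Set.mem_setOf_eq, Prod.mk.injEq]; tauto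
  have e2 : ({ω | X ω = x ∧ T ω = t} ∩ {ω | Y ω = y})
      = {ω | (X ω, Y ω) = (x, y) ∧ T ω = t} := by
    ext ω; simp only [Set.mem_inter_iff, Set.mem_setOf_eq, Prod.mk.injEq]; tauto
  rw [e1, e2, h u (x, y) t]

/-- Contraction: `U ⊥⊥ Y | X`, `T = f ∘ X` a.s., `U ⊥⊥ X | T` imply `U ⊥⊥ (X,Y) | T`. -/
lemma condIndep_pair {Ω α β γ δ : Type} (μ : PMF Ω) (U : Ω → α) (X : Ω → β)
    (Y : Ω → γ) (T : Ω → δ)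
    (hci : CondIndep μ U Y X) (f : β → δ) (hf : ∀ ω ∈ μ.support, T ω = f (X ω))
    (h2 : CondIndep μ U X T) : CondIndep μ U (fun ω => (X ω, Y ω)) T := by
  rintro u ⟨x, y⟩ t
  by_cases hfx : f x = t
  · -- the nondegenerate case: on the support, `X = x` forces `T = t`
    have ex : ∀ ω ∈ μ.support, X ω = x → T ω = t := fun ω hω hx => by
      rw [hf ω hω, hx, hfx]
    have e1 : pr μ {ω | U ω = u ∧ (X ω, Y ω) = (x, y) ∧ T ω = t}
        = pr μ {ω | U ω = u ∧ X ω = x ∧ Y ω = y} := pr_congr μ fun ω hω => by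
      simp only [Set.mem_setOf_eq, Prod.mk.injEq]
      constructor
      · rintro ⟨h1, ⟨h2', h3⟩, _⟩; exact ⟨h1, h2', h3⟩
      · rintro ⟨h1, h2', h3⟩; exact ⟨h1, ⟨h2', h3⟩, ex ω hω h2'⟩
    have e2 : pr μ {ω | (X ω, Y ω) = (x, y) ∧ T ω = t}
        = pr μ {ω | X ω = x ∧ Y ω = y} := pr_congr μ fun ω hω => by
      simp only [Set.mem_setOf_eq, Prod.mk.injEq]
      constructor
      · rintro ⟨⟨h2', h3⟩, _⟩; exact ⟨h2', h3⟩
      · rintro ⟨h2', h3⟩; exact ⟨⟨h2', h3⟩, ex ω hω h2'⟩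
    rw [e1, e2]
    -- normalized versions of the hypotheses
    have key : pr μ {ω | U ω = u ∧ X ω = x} * pr μ {ω | T ω = t}
        = pr μ {ω | U ω = u ∧ T ω = t} * pr μ {ω | X ω = x} := by
      have e3 : pr μ {ω | U ω = u ∧ X ω = x ∧ T ω = t}
          = pr μ {ω | U ω = u ∧ X ω = x} := pr_congr μ fun ω hω => by
        simp only [Set.mem_setOf_eq]
        exact ⟨fun ⟨a, b, _⟩ => ⟨a, b⟩, fun ⟨a, b⟩ => ⟨a, b, ex ω hω b⟩⟩
      have e4 : pr μ {ω | X ω = x ∧ T ω = t} = pr μ {ω | X ω = x} :=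
        pr_congr μ fun ω hω => by
          simp only [Set.mem_setOf_eq]
          exact ⟨fun ⟨a, _⟩ => a, fun a => ⟨a, ex ω hω a⟩⟩
      have := h2 u x t
      rwa [e3, e4] at this
    have hci' : pr μ {ω | U ω = u ∧ X ω = x ∧ Y ω = y} * pr μ {ω | X ω = x}
        = pr μ {ω | U ω = u ∧ X ω = x} * pr μ {ω | X ω = x ∧ Y ω = y} := by
      have := hci u y x
      have e5 : pr μ {ω | U ω = u ∧ Y ω = y ∧ X ω = x}
          = pr μ {ω | U ω = u ∧ X ω = x ∧ Y ω = y} := pr_congr μ fun ω _ => by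
        simp only [Set.mem_setOf_eq]; tauto
      have e6 : pr μ {ω | Y ω = y ∧ X ω = x} = pr μ {ω | X ω = x ∧ Y ω = y} :=
        pr_congr μ fun ω _ => by simp only [Set.mem_setOf_eq]; tauto
      rwa [e5, e6] at this
    by_cases hx0 : pr μ {ω | X ω = x} = 0
    · have z1 : pr μ {ω | U ω = u ∧ X ω = x ∧ Y ω = y} = 0 :=
        le_antisymm (le_trans (pr_mono μ (fun ω hω => hω.2.1)) hx0.le) zero_le
      have z2 : pr μ {ω | X ω = x ∧ Y ω = y} = 0 :=
        le_antisymm (le_trans (pr_mono μ (fun ω hω => hω.1)) hx0.le) zero_le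
      rw [z1, z2, zero_mul, mul_zero]
    · have hmul : pr μ {ω | U ω = u ∧ X ω = x ∧ Y ω = y} * pr μ {ω | T ω = t}
            * pr μ {ω | X ω = x}
          = pr μ {ω | U ω = u ∧ T ω = t} * pr μ {ω | X ω = x ∧ Y ω = y}
            * pr μ {ω | X ω = x} := by
        calc pr μ {ω | U ω = u ∧ X ω = x ∧ Y ω = y} * pr μ {ω | T ω = t}
              * pr μ {ω | X ω = x}
            = pr μ {ω | U ω = u ∧ X ω = x ∧ Y ω = y} * pr μ {ω | X ω = x}
              * pr μ {ω | T ω = t} := by ring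
          _ = pr μ {ω | U ω = u ∧ X ω = x} * pr μ {ω | X ω = x ∧ Y ω = y}
              * pr μ {ω | T ω = t} := by rw [hci']
          _ = pr μ {ω | U ω = u ∧ X ω = x} * pr μ {ω | T ω = t}
              * pr μ {ω | X ω = x ∧ Y ω = y} := by ring
          _ = pr μ {ω | U ω = u ∧ T ω = t} * pr μ {ω | X ω = x}
              * pr μ {ω | X ω = x ∧ Y ω = y} := by rw [key]
          _ = _ := by ring
      exact (ENNReal.mul_left_inj hx0 (pr_ne_top μ _)).mp hmul
  · -- degenerate case: both sides vanish
    have z1 : pr μ {ω | U ω = u ∧ (X ω, Y ω) = (x, y) ∧ T ω = t} = 0 :=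
      pr_zero μ fun ω hω hc => by
        rcases hc with ⟨_, hxy, ht⟩
        have hx : X ω = x := (Prod.mk.injEq _ _ _ _ ▸ hxy).1
        exact hfx (by rw [← ht, hf ω hω, hx])
    have z2 : pr μ {ω | (X ω, Y ω) = (x, y) ∧ T ω = t} = 0 :=
      pr_zero μ fun ω hω hc => by
        rcases hc with ⟨hxy, ht⟩
        have hx : X ω = x := (Prod.mk.injEq _ _ _ _ ▸ hxy).1
        exact hfx (by rw [← ht, hf ω hω, hx])
    rw [z1, z2, zero_mul, mul_zero]

/-- Lemma 2 of the paper: if `U ⊥⊥ Y | X`, then `S(X;U) =ι S((X,Y);U)`. -/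
theorem minSuffStat_add_locally_processed {Ω α β γ δ ε : Type}
    (μ : PMF Ω) (U : Ω → α) (X : Ω → β) (Y : Ω → γ)
    (hU : FinSupp μ U) (hX : FinSupp μ X) (hY : FinSupp μ Y)
    (hci : CondIndep μ U Y X)
    (T1 : Ω → δ) (T2 : Ω → ε)
    (hT1 : MinSuffStat μ X U T1)
    (hT2 : MinSuffStat μ (fun ω => (X ω, Y ω)) U T2) :
    InfoEq μ T1 T2 := by
  obtain ⟨⟨⟨f, hf⟩, hciT1⟩, hmin1⟩ := hT1
  obtain ⟨⟨hfd2, hciT2⟩, hmin2⟩ := hT2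
  -- T1 is a sufficient statistic of (X, Y) for U
  have hSuff1 : SuffStat μ (fun ω => (X ω, Y ω)) U T1 := by
    refine ⟨⟨fun p => f p.1, fun ω hω => hf ω hω⟩, ?_⟩
    exact condIndep_pair μ U X Y T1 hci f hf hciT1
  have h12 : FunDep μ T1 T2 := hmin2 δ T1 hSuff1
  -- T2 is a sufficient statistic of X for U
  have hSuff2 : SuffStat μ X U T2 := by
    obtain ⟨g, hg⟩ := h12
    refine ⟨⟨g ∘ f, fun ω hω => ?_⟩, ?_⟩
    · simp only [Function.comp_apply]
      rw [hg ω hω, hf ω hω]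
    · exact condIndep_fst μ U X Y T2 hY hciT2
  exact ⟨h12, hmin1 ε T2 hSuff2⟩

end Paper
end

section
/- Let X, Y, Z be discrete random variables with finite support on a common probability space, with probability mass functions p_X, p_Y, p_Z. If X ⊥⊥ Z and X ≤ι (Y, Z) (i.e., X is a function of the pair (Y,Z)), then p_X majorizes p_Y. -/
namespace Paper

lemma pr_eq_tsum' {Ω : Type} (μ : PMF Ω) (p : Ω → Prop) [DecidablePred p] :
    pr μ {ω | p ω} = ∑' ω, if p ω then μ ω else 0 := by
  rw [pr, PMF.toOuterMeasure_apply]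
  exact tsum_congr fun ω => Set.indicator_apply _ _ _

lemma sum_pr_eq {Ω : Type} (μ : PMF Ω) (g : Ω → ℕ) (s : Finset ℕ) :
    ∑ y ∈ s, pr μ {ω | g ω = y} = ∑' ω, (if g ω ∈ s then μ ω else 0) := by
  classical
  calc ∑ y ∈ s, pr μ {ω | g ω = y}
      = ∑ y ∈ s, ∑' ω, if g ω = y then μ ω else 0 :=
        Finset.sum_congr rfl fun y _ => pr_eq_tsum' μ _
    _ = ∑' ω, ∑ y ∈ s, if g ω = y then μ ω else 0 :=
        (Summable.tsum_finsetSum fun i _ => ENNReal.summable).symm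
    _ = ∑' ω, if g ω ∈ s then μ ω else 0 :=
        tsum_congr fun ω => Finset.sum_ite_eq s (g ω) fun _ => μ ω

lemma sum_pr_eq2 {Ω : Type} (μ : PMF Ω) (X Z : Ω → ℕ) (t : Finset ℕ) (z : ℕ) :
    ∑ x ∈ t, pr μ {ω | X ω = x ∧ Z ω = z}
      = ∑' ω, (if X ω ∈ t ∧ Z ω = z then μ ω else 0) := by
  classical
  calc ∑ x ∈ t, pr μ {ω | X ω = x ∧ Z ω = z}
      = ∑ x ∈ t, ∑' ω, if X ω = x ∧ Z ω = z then μ ω else 0 :=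
        Finset.sum_congr rfl fun x _ => pr_eq_tsum' μ _
    _ = ∑' ω, ∑ x ∈ t, if X ω = x ∧ Z ω = z then μ ω else 0 :=
        (Summable.tsum_finsetSum fun i _ => ENNReal.summable).symm
    _ = ∑' ω, if X ω ∈ t ∧ Z ω = z then μ ω else 0 := by
        refine tsum_congr fun ω => ?_
        by_cases hz : Z ω = z
        · simp only [hz, and_true]
          exact Finset.sum_ite_eq t (X ω) fun _ => μ ω
        · simp [hz]

/-- First part of Lemma 4 of the paper: if `X ⊥⊥ Z` and `X ≤ι (Y, Z)`,
then `p_X ⪰ p_Y`. -/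
theorem indep_funDep_majorizes {Ω : Type} (μ : PMF Ω) (X Y Z : Ω → ℕ)
    (hX : FinSupp μ X) (hY : FinSupp μ Y) (hZ : FinSupp μ Z)
    (hXZ : Indep μ X Z)
    (hfd : FunDep μ (fun ω => (Y ω, Z ω)) X) :
    Majorizes (distOf μ X) (distOf μ Y) := by
  classical
  intro s
  obtain ⟨f, hf⟩ := hfd
  set Zfin := hZ.toFinset with hZfin
  have hZmem : ∀ ω ∈ μ.support, Z ω ∈ Zfin := fun ω h =>
    hZ.mem_toFinset.2 ⟨ω, h, rfl⟩
  set T : ℕ → Finset ℕ := fun z => s.image (fun y => f (y, z)) with hT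
  set g : ℕ → ENNReal := fun z => ∑ x ∈ T z, distOf μ X x with hg
  have hne : Zfin.Nonempty := by
    obtain ⟨ω, hω⟩ := μ.support_nonempty
    exact ⟨Z ω, hZmem ω hω⟩
  obtain ⟨z₀, hz₀, hmax⟩ := Zfin.exists_max_image g hne
  refine ⟨T z₀, Finset.card_image_le, ?_⟩
  have hZsum : ∑ z ∈ Zfin, pr μ {ω | Z ω = z} ≤ 1 := by
    rw [sum_pr_eq]
    calc ∑' ω, (if Z ω ∈ Zfin then μ ω else 0) ≤ ∑' ω, μ ω :=
          Summable.tsum_le_tsum (fun ω => by split <;> simp) ENNReal.summable ENNReal.summable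
      _ = 1 := μ.tsum_coe
  calc ∑ y ∈ s, distOf μ Y y
      = ∑' ω, (if Y ω ∈ s then μ ω else 0) := sum_pr_eq μ Y s
    _ ≤ ∑' ω, ∑ z ∈ Zfin, (if X ω ∈ T z ∧ Z ω = z then μ ω else 0) := by
        refine Summable.tsum_le_tsum (fun ω => ?_) ENNReal.summable ENNReal.summable
        by_cases hy : Y ω ∈ s
        · by_cases hμ : μ ω = 0
          · simp [hμ]
          · have hω : ω ∈ μ.support := (PMF.mem_support_iff μ ω).2 hμ
            have hzω : Z ω ∈ Zfin := hZmem ω hω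
            have hXω : X ω ∈ T (Z ω) := by
              rw [hT]
              exact Finset.mem_image.2 ⟨Y ω, hy, (hf ω hω).symm⟩
            have := Finset.single_le_sum
              (f := fun z => if X ω ∈ T z ∧ Z ω = z then μ ω else 0)
              (fun i _ => zero_le) hzω
            simpa [hy, hXω] using this
        · simp [hy]
    _ = ∑ z ∈ Zfin, ∑' ω, (if X ω ∈ T z ∧ Z ω = z then μ ω else 0) :=
        Summable.tsum_finsetSum fun i _ => ENNReal.summable
    _ = ∑ z ∈ Zfin, ∑ x ∈ T z, pr μ {ω | X ω = x ∧ Z ω = z} :=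
        Finset.sum_congr rfl fun z _ => (sum_pr_eq2 μ X Z (T z) z).symm
    _ = ∑ z ∈ Zfin, g z * pr μ {ω | Z ω = z} := by
        refine Finset.sum_congr rfl fun z _ => ?_
        rw [hg, Finset.sum_mul]
        exact Finset.sum_congr rfl fun x _ => hXZ x z
    _ ≤ ∑ z ∈ Zfin, g z₀ * pr μ {ω | Z ω = z} :=
        Finset.sum_le_sum fun z hz => mul_le_mul_left (hmax z hz) _
    _ = g z₀ * ∑ z ∈ Zfin, pr μ {ω | Z ω = z} := (Finset.mul_sum _ _ _).symm
    _ ≤ g z₀ * 1 := mul_le_mul_right hZsum _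
    _ = ∑ x ∈ T z₀, distOf μ X x := by rw [mul_one]

end Paper
end
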